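/- Let the valuations be monotone with marginal values at most 1, let A be an EF1 allocation, and let π be a permutation of Fin n maximizing ∑_{i} v_i(A_{π(i)}) over all permutations. Then the allocation B with B_i = A_{π(i)} can be made envy-free with a subsidy of at most 2(n − 1) to each agent: there exists a payment vector p such that (B, p) is envy-free and p i ≤ 2(n − 1) for every agent i. -/

import Mathlib

namespace EF1Aux

variable {n : ℕ}

/-- weight of a walk given edge weights -/
def wsum (w : Fin n → Fin n → ℝ) : List (Fin n) → ℝ
  | [] => 0
  | [_] => 0
  | a :: b :: l => w a b + wsum w (b :: l)

@[simp] lemma wsum_nil (w : Fin n → Fin n → ℝ) : wsum w [] = 0 := rfl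
@[simp] lemma wsum_single (w : Fin n → Fin n → ℝ) (a : Fin n) : wsum w [a] = 0 := rfl
@[simp] lemma wsum_cons_cons (w : Fin n → Fin n → ℝ) (a b : Fin n) (l : List (Fin n)) :
    wsum w (a :: b :: l) = w a b + wsum w (b :: l) := rfl

lemma wsum_splice (w : Fin n → Fin n → ℝ) :
    ∀ (l1 : List (Fin n)) (a : Fin n) (l2 : List (Fin n)),
      wsum w (l1 ++ a :: l2) = wsum w (l1 ++ [a]) + wsum w (a :: l2)
  | [], a, l2 => by simp
  | [b], a, l2 => by simp [wsum]
  | b :: c :: t, a, l2 => by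
    have := wsum_splice w (c :: t) a l2
    simp only [List.cons_append, wsum_cons_cons] at this ⊢
    linarith

/-- key formPerm sum identity -/
lemma formPerm_sum (w : Fin n → Fin n → ℝ) :
    ∀ (t : List (Fin n)) (b : Fin n), (b :: t).Nodup →
      ∀ (τ : Equiv.Perm (Fin n)), (∀ x ∈ b :: t, x ≠ b → τ x = x) →
      ((b :: t).map (fun x => w x (τ ((b :: t).formPerm x)))).sum
        = wsum w (b :: t ++ [τ b])
  | [], b, _, τ, _ => by simp
  | c :: t', b, hb, τ, hτ => by
    have hbn : b ∉ c :: t' := (List.nodup_cons.mp hb).1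
    have hn' : (c :: t').Nodup := (List.nodup_cons.mp hb).2
    have hcb : c ≠ b := fun h => hbn (h ▸ (List.mem_cons_self : c ∈ c :: t'))
    have hfp : ∀ x, (b :: c :: t').formPerm x = Equiv.swap b c ((c :: t').formPerm x) := by
      intro x; rw [List.formPerm_cons_cons]; rfl
    have hτ' : ∀ x ∈ c :: t', x ≠ c → (τ * Equiv.swap b c) x = x := by
      intro x hx hxc
      have hxb : x ≠ b := fun h => hbn (h ▸ hx)
      simp only [Equiv.Perm.mul_apply, Equiv.swap_apply_of_ne_of_ne hxb hxc]
      exact hτ x (List.mem_cons_of_mem _ hx) hxb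
    have IH := formPerm_sum w t' c hn' (τ * Equiv.swap b c) hτ'
    have hterm1 : τ ((b :: c :: t').formPerm b) = c := by
      rw [hfp, List.formPerm_apply_of_notMem hbn, Equiv.swap_apply_left]
      exact hτ c (List.mem_cons_of_mem _ ((List.mem_cons_self : c ∈ c :: t'))) hcb
    have hrest : ∀ x ∈ c :: t',
        τ ((b :: c :: t').formPerm x) = (τ * Equiv.swap b c) ((c :: t').formPerm x) := by
      intro x hx; rw [hfp]; rfl
    have hmapeq : ((c :: t').map (fun x => w x (τ ((b :: c :: t').formPerm x)))).sum
        = ((c :: t').map (fun x => w x ((τ * Equiv.swap b c) ((c :: t').formPerm x)))).sum := by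
      apply congrArg
      exact List.map_congr_left (fun x hx => by rw [hrest x hx])
    have hswapb : (τ * Equiv.swap b c) c = τ b := by
      simp [Equiv.Perm.mul_apply]
    calc ((b :: c :: t').map (fun x => w x (τ ((b :: c :: t').formPerm x)))).sum
        = w b (τ ((b :: c :: t').formPerm b))
          + ((c :: t').map (fun x => w x (τ ((b :: c :: t').formPerm x)))).sum := by
          simp
      _ = w b c + wsum w (c :: t' ++ [τ b]) := by
          rw [hterm1, hmapeq, IH, hswapb]
      _ = wsum w (b :: (c :: t') ++ [τ b]) := by simp

lemma cycle_nonpos (w : Fin n → Fin n → ℝ)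
    (h0 : ∀ i, w i i = 0)
    (hperm : ∀ σ : Equiv.Perm (Fin n), ∑ i, w i (σ i) ≤ 0)
    (a : Fin n) (l : List (Fin n)) (hl : (a :: l).Nodup) :
    wsum w (a :: l ++ [a]) ≤ 0 := by
  set σ := (a :: l).formPerm with hσ
  have hsum := hperm σ
  have hsplit : ∑ i, w i (σ i) = ∑ i ∈ (a :: l).toFinset, w i (σ i) := by
    rw [← Finset.sum_subset (Finset.subset_univ (a :: l).toFinset)]
    intro x _ hx
    rw [hσ, List.formPerm_apply_of_notMem (fun h => hx (List.mem_toFinset.mpr h))]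
    exact h0 x
  have hfin : ∑ i ∈ (a :: l).toFinset, w i (σ i)
      = ((a :: l).map (fun x => w x (σ x))).sum := List.sum_toFinset _ hl
  have hfp := formPerm_sum w l a hl 1 (fun x _ _ => rfl)
  simp only [Equiv.Perm.one_apply] at hfp
  rw [hsplit, hfin] at hsum
  rwa [hfp] at hsum

def pathSet (n : ℕ) : Finset (List (Fin n)) :=
  Finset.univ.powerset.biUnion fun s => (s.sort (· ≤ ·)).permutations.toFinset

lemma mem_pathSet {l : List (Fin n)} : l ∈ pathSet n ↔ l.Nodup := by
  simp only [pathSet, Finset.mem_biUnion, Finset.mem_powerset, List.mem_toFinset,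
    List.mem_permutations]
  constructor
  · rintro ⟨s, -, hp⟩
    exact hp.symm.nodup (Finset.sort_nodup _ _)
  · intro h
    refine ⟨l.toFinset, Finset.subset_univ _, ?_⟩
    exact List.perm_of_nodup_nodup_toFinset_eq h (Finset.sort_nodup _ _)
      (Finset.sort_toFinset _ _).symm

theorem graph_potential (w : Fin n → Fin n → ℝ)
    (h0 : ∀ i, w i i = 0)
    (hperm : ∀ σ : Equiv.Perm (Fin n), ∑ i, w i (σ i) ≤ 0)
    (hpathbd : ∀ l : List (Fin n), l.Nodup → wsum w l ≤ 2 * ((n : ℝ) - 1)) :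
    ∃ p : Fin n → ℝ, (∀ i, 0 ≤ p i) ∧ (∀ i k, p i ≥ w i k + p k) ∧
      (∀ i, p i ≤ 2 * ((n : ℝ) - 1)) := by
  classical
  set T : Fin n → Finset (List (Fin n)) :=
    fun i => (pathSet n).filter (fun l => l.head? = some i) with hT
  have hmemT : ∀ i (l : List (Fin n)), l ∈ T i ↔ l.Nodup ∧ l.head? = some i := by
    intro i l; simp [hT, mem_pathSet]
  have hne : ∀ i, (T i).Nonempty := by
    intro i
    exact ⟨[i], (hmemT i [i]).mpr ⟨List.nodup_singleton i, rfl⟩⟩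
  set p : Fin n → ℝ := fun i => (T i).sup' (hne i) (wsum w) with hp
  have hle : ∀ i (l : List (Fin n)), l ∈ T i → wsum w l ≤ p i := by
    intro i l hl; exact Finset.le_sup' _ hl
  refine ⟨p, ?_, ?_, ?_⟩
  · intro i
    have := hle i [i] ((hmemT i [i]).mpr ⟨List.nodup_singleton i, rfl⟩)
    simpa using this
  · intro i k
    obtain ⟨l, hlmem, hlval⟩ := Finset.exists_mem_eq_sup' (hne k) (wsum w)
    obtain ⟨hlnd, hlhead⟩ := (hmemT k l).mp hlmem
    obtain ⟨t, rfl⟩ : ∃ t, l = k :: t := by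
      cases l with
      | nil => simp at hlhead
      | cons a t =>
        have hak : a = k := by simpa using hlhead
        exact ⟨t, by rw [hak]⟩
    by_cases hik : i = k
    · subst hik; rw [h0]; simp [ge_iff_le]
    by_cases hmem : i ∈ k :: t
    · -- splice argument
      have hit : i ∈ t := by
        cases List.mem_cons.mp hmem with
        | inl h => exact absurd h hik
        | inr h => exact h
      obtain ⟨l1, l2, rfl⟩ := List.append_of_mem hit
      have hl' : ((k :: l1) ++ i :: l2).Nodup := by simpa using hlnd
      have hnd1 : (k :: l1).Nodup := hl'.of_append_left
      have hnd2 : (i :: l2).Nodup := hl'.of_append_right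
      have hdisj := (List.nodup_append.mp hl').2.2
      have hinotin : i ∉ k :: l1 := fun h => hdisj i h i List.mem_cons_self rfl
      have hcyc := cycle_nonpos w h0 hperm i (k :: l1) (List.nodup_cons.mpr ⟨hinotin, hnd1⟩)
      have hsplice := wsum_splice w (k :: l1) i l2
      have hcyc' : wsum w (i :: (k :: l1) ++ [i]) = w i k + wsum w ((k :: l1) ++ [i]) := by
        simp
      have hle2 := hle i (i :: l2) ((hmemT i (i :: l2)).mpr ⟨hnd2, rfl⟩)
      have hval : p k = wsum w ((k :: l1) ++ i :: l2) := hlval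
      rw [hval, hsplice]
      rw [hcyc'] at hcyc
      linarith
    · have hnd' : (i :: k :: t).Nodup := List.nodup_cons.mpr ⟨hmem, hlnd⟩
      have hle2 := hle i (i :: k :: t) ((hmemT i _).mpr ⟨hnd', rfl⟩)
      rw [wsum_cons_cons] at hle2
      have hval : p k = wsum w (k :: t) := hlval
      rw [hval]
      linarith
  · intro i
    apply Finset.sup'_le
    intro l hl
    exact hpathbd l ((hmemT i l).mp hl).1

end EF1Aux


/-- Let the valuations be monotone with marginal values at most 1, let
A be an EF1 allocation, and let π be a permutation maximizing ∑ i, v i (A (π i))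
over all permutations. Then the allocation B with B i = A (π i) can be made
envy-free with a subsidy of at most 2(n − 1) to each agent. -/
theorem EF1_redistribution_subsidy_bound
    (n m : ℕ) (hn : 1 ≤ n)
    (v : Fin n → Finset (Fin m) → ℝ)
    (hv0 : ∀ i, v i ∅ = 0)
    (hmono : ∀ i (S T : Finset (Fin m)), S ⊆ T → v i S ≤ v i T)
    (hmarg : ∀ i (S : Finset (Fin m)) (j : Fin m), j ∉ S → v i (insert j S) ≤ v i S + 1)
    (A : Fin n → Finset (Fin m))
    (hdisj : ∀ i k, i ≠ k → Disjoint (A i) (A k))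
    (hcover : Finset.univ.biUnion A = Finset.univ)
    (hEF1 : ∀ i k : Fin n, A k = ∅ ∨
      ∃ j ∈ A k, v i (A i) ≥ v i ((A k).erase j))
    (π : Equiv.Perm (Fin n))
    (hπ : ∀ σ : Equiv.Perm (Fin n), (∑ i, v i (A (σ i))) ≤ ∑ i, v i (A (π i))) :
    ∃ p : Fin n → ℝ, (∀ i, 0 ≤ p i) ∧
      (∀ i k : Fin n, v i (A (π i)) + p i ≥ v i (A (π k)) + p k) ∧
      (∀ i, p i ≤ 2 * ((n : ℝ) - 1)) := by
  classical
  -- EF1 up to one good, in additive form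
  have hEF1' : ∀ a b : Fin n, v a (A b) ≤ v a (A a) + 1 := by
    intro a b
    rcases hEF1 a b with h | ⟨j, hj, hge⟩
    · rw [h, hv0]
      have h0 : (0:ℝ) ≤ v a (A a) := by
        have := hmono a ∅ (A a) (Finset.empty_subset _)
        rwa [hv0] at this
      linarith
    · have hins : insert j ((A b).erase j) = A b := Finset.insert_erase hj
      have hmrg := hmarg a ((A b).erase j) j (Finset.notMem_erase j _)
      rw [hins] at hmrg
      linarith
  set w : Fin n → Fin n → ℝ := fun i k => v i (A (π k)) - v i (A (π i)) with hw
  set δ : Fin n → ℝ := fun x => v x (A x) - v x (A (π x)) with hδ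
  have hδlb : ∀ x, -1 ≤ δ x := by
    intro x
    have := hEF1' x (π x)
    simp only [hδ]
    linarith
  have hδsum : ∑ x, δ x ≤ 0 := by
    have := hπ (Equiv.refl _)
    simp only [Equiv.refl_apply] at this
    simp only [hδ, Finset.sum_sub_distrib]
    linarith
  have hedge : ∀ a b : Fin n, w a b ≤ δ a + 1 := by
    intro a b
    have := hEF1' a (π b)
    simp only [hw, hδ]
    linarith
  -- bound wsum by sum over dropLast
  have hwsum_bd : ∀ l : List (Fin n),
      EF1Aux.wsum w l ≤ ((l.dropLast).map (fun x => δ x + 1)).sum := by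
    intro l
    induction l with
    | nil => simp [EF1Aux.wsum]
    | cons a t ih =>
      cases t with
      | nil => simp [EF1Aux.wsum]
      | cons b t' =>
        rw [EF1Aux.wsum_cons_cons]
        have hd : (a :: b :: t').dropLast = a :: (b :: t').dropLast := rfl
        rw [hd, List.map_cons, List.sum_cons]
        have := hedge a b
        linarith
  have hpathbd : ∀ l : List (Fin n), l.Nodup → EF1Aux.wsum w l ≤ 2 * ((n : ℝ) - 1) := by
    intro l hl
    rcases Nat.lt_or_ge n 2 with h2 | h2
    · -- n = 1
      have hn1 : n = 1 := by omega
      subst hn1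
      have hlen : l.length ≤ 1 := by
        have := hl.length_le_card
        simpa using this
      match l, hlen with
      | [], _ => simp [EF1Aux.wsum]
      | [a], _ => simp [EF1Aux.wsum]
    · have hdl : l.dropLast.Nodup := hl.sublist (List.dropLast_sublist l)
      set s : Finset (Fin n) := l.dropLast.toFinset with hs
      have hmap : ((l.dropLast).map (fun x => δ x + 1)).sum = ∑ x ∈ s, (δ x + 1) :=
        (List.sum_toFinset _ hdl).symm
      have hsplit : ∑ x, δ x = ∑ x ∈ s, δ x + ∑ x ∈ sᶜ, δ x :=
        (Finset.sum_add_sum_compl s δ).symm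
      have hcompl : -(sᶜ.card : ℝ) ≤ ∑ x ∈ sᶜ, δ x := by
        calc -(sᶜ.card : ℝ) = ∑ _x ∈ sᶜ, (-1 : ℝ) := by simp
          _ ≤ ∑ x ∈ sᶜ, δ x := Finset.sum_le_sum (fun x _ => hδlb x)
      have hcard : (s.card : ℝ) + (sᶜ.card : ℝ) = n := by
        have h := Finset.card_add_card_compl s
        rw [Fintype.card_fin] at h
        exact_mod_cast congrArg (Nat.cast : ℕ → ℝ) h
      have hsum_s : ∑ x ∈ s, δ x ≤ (sᶜ.card : ℝ) := by linarith [hδsum]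
      have : EF1Aux.wsum w l ≤ (n : ℝ) := by
        have h1 := hwsum_bd l
        rw [hmap] at h1
        have h2 : ∑ x ∈ s, (δ x + 1) = ∑ x ∈ s, δ x + s.card := by
          rw [Finset.sum_add_distrib]; simp
        linarith
      have : (n : ℝ) ≤ 2 * ((n : ℝ) - 1) := by
        have : (2 : ℝ) ≤ (n : ℝ) := by exact_mod_cast h2
        linarith
      linarith
  have h0 : ∀ i, w i i = 0 := fun i => sub_self _
  have hperm : ∀ σ : Equiv.Perm (Fin n), ∑ i, w i (σ i) ≤ 0 := by
    intro σ
    have := hπ (σ.trans π)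
    simp only [Equiv.trans_apply] at this
    simp only [hw, Finset.sum_sub_distrib]
    linarith
  obtain ⟨p, hp0, hpk, hpbd⟩ := EF1Aux.graph_potential w h0 hperm hpathbd
  refine ⟨p, hp0, ?_, hpbd⟩
  intro i k
  have := hpk i k
  simp only [hw] at this
  linarith
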